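/- Every coefficient of the formal power series G_0(w) = 1/(4(1−w^2)) + 3/(8√(1−(2/3)w+w^2)) + 3/(8√(1+(2/3)w+w^2)) is a rational number whose denominator is a power of 3. -/

import Mathlib

open PowerSeries

namespace G0aux
open Finset


def S : Subring ℚ where
  carrier := {x | ∃ (a : ℤ) (k : ℕ), x = (a : ℚ) / 3 ^ k}
  zero_mem' := ⟨0, 0, by norm_num⟩
  one_mem' := ⟨1, 0, by norm_num⟩
  add_mem' := by
    rintro x y ⟨a, k, rfl⟩ ⟨b, l, rfl⟩
    refine ⟨a * 3 ^ l + b * 3 ^ k, k + l, ?_⟩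
    push_cast
    rw [pow_add]
    field_simp
  mul_mem' := by
    rintro x y ⟨a, k, rfl⟩ ⟨b, l, rfl⟩
    refine ⟨a * b, k + l, ?_⟩
    push_cast
    rw [pow_add]
    field_simp
  neg_mem' := by
    rintro x ⟨a, k, rfl⟩
    exact ⟨-a, k, by push_cast; ring⟩

lemma mem_S {x : ℚ} : x ∈ S ↔ ∃ (a : ℤ) (k : ℕ), x = (a : ℚ) / 3 ^ k := Iff.rfl

lemma intS (a : ℤ) : (a : ℚ) ∈ S := mem_S.2 ⟨a, 0, by norm_num⟩

/-- all coefficients in `S` -/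
def memS (f : PowerSeries ℚ) : Prop := ∀ n, coeff n f ∈ S

/-- all coefficients divisible by `c` within `S` -/
def Md (c : ℚ) (f : PowerSeries ℚ) : Prop := ∀ n, ∃ s ∈ S, coeff n f = c * s

lemma memS_add {f g} (hf : memS f) (hg : memS g) : memS (f + g) := fun n => by
  rw [map_add]; exact S.add_mem (hf n) (hg n)

lemma memS_mul {f g} (hf : memS f) (hg : memS g) : memS (f * g) := fun n => by
  rw [coeff_mul]; exact S.sum_mem fun p _ => S.mul_mem (hf p.1) (hg p.2)

lemma memS_one : memS 1 := fun n => by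
  rw [coeff_one]; split <;> simp [S.one_mem, S.zero_mem]

lemma memS_neg {f} (hf : memS f) : memS (-f) := fun n => by
  rw [map_neg]; exact S.neg_mem (hf n)

lemma memS_sub {f g} (hf : memS f) (hg : memS g) : memS (f - g) := by
  rw [sub_eq_add_neg]; exact memS_add hf (memS_neg hg)

lemma memS_C {c : ℚ} (hc : c ∈ S) : memS (C c) := fun n => by
  rw [coeff_C]; split <;> simp [hc, S.zero_mem]

lemma memS_X : memS (X : PowerSeries ℚ) := fun n => by
  rw [coeff_X]; split <;> simp [S.one_mem, S.zero_mem]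

lemma memS_pow {f} (hf : memS f) (k : ℕ) : memS (f ^ k) := by
  induction k with
  | zero => simpa using memS_one
  | succ k ih => rw [pow_succ]; exact memS_mul ih hf

lemma memS_inv {f : PowerSeries ℚ} (hf : memS f) (h0 : constantCoeff f = 1) :
    memS f⁻¹ := by
  intro n
  induction n using Nat.strong_induction_on with
  | _ n ih =>
    rw [PowerSeries.coeff_inv, h0]
    split
    · simpa using S.one_mem
    · rw [inv_one, neg_one_mul]
      refine S.neg_mem (S.sum_mem fun p hp => ?_)
      split
      · next h => exact S.mul_mem (hf p.1) (ih p.2 h)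
      · exact S.zero_mem

lemma Md_memS {c f} (hc : c ∈ S) (hf : Md c f) : memS f := fun n => by
  obtain ⟨s, hs, he⟩ := hf n
  rw [he]; exact S.mul_mem hc hs

lemma Md_add {c f g} (hf : Md c f) (hg : Md c g) : Md c (f + g) := fun n => by
  obtain ⟨s, hs, hes⟩ := hf n
  obtain ⟨t, ht, het⟩ := hg n
  exact ⟨s + t, S.add_mem hs ht, by rw [map_add, hes, het]; ring⟩

lemma Md_mul_memS {c f g} (hf : Md c f) (hg : memS g) : Md c (f * g) := fun n => by
  choose s hsS hse using hf
  refine ⟨∑ p ∈ antidiagonal n, s p.1 * coeff p.2 g,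
    S.sum_mem fun p _ => S.mul_mem (hsS p.1) (hg p.2), ?_⟩
  rw [coeff_mul, Finset.mul_sum]
  exact Finset.sum_congr rfl fun p _ => by rw [hse p.1]; ring

lemma Md_mul {c d f g} (hf : Md c f) (hg : Md d g) : Md (c * d) (f * g) := fun n => by
  choose s hsS hse using hf
  choose t htS hte using hg
  refine ⟨∑ p ∈ antidiagonal n, s p.1 * t p.2,
    S.sum_mem fun p _ => S.mul_mem (hsS p.1) (htS p.2), ?_⟩
  rw [coeff_mul, Finset.mul_sum]
  exact Finset.sum_congr rfl fun p _ => by rw [hse p.1, hte p.2]; ring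



def sq (g : ℕ → ℚ) : ℕ → ℚ
  | 0 => 1
  | n+1 => (g (n+1) - ∑ i ∈ (Finset.Ioo 0 (n+1)).attach,
      sq g i.1 * sq g (n+1 - i.1)) / 2
decreasing_by
  · have := i.2; simp only [Finset.mem_Ioo] at this; omega
  · have := i.2; simp only [Finset.mem_Ioo] at this; omega

lemma sq_sq (g : ℕ → ℚ) (hg0 : g 0 = 1) :
    (PowerSeries.mk (sq g)) ^ 2 = PowerSeries.mk g := by
  ext n
  rw [pow_two, coeff_mul, Finset.Nat.sum_antidiagonal_eq_sum_range_succ_mk]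
  simp only [coeff_mk]
  cases n with
  | zero => simpa [sq] using hg0.symm
  | succ m =>
    have hsum : ∑ i ∈ (Finset.Ioo 0 (m+1)).attach, sq g i.1 * sq g (m+1 - i.1)
        = ∑ k ∈ Finset.range m, sq g (1+k) * sq g (m+1 - (1+k)) := by
      rw [Finset.sum_attach (Finset.Ioo 0 (m+1)) (fun i => sq g i * sq g (m+1 - i))]
      rw [show Finset.Ioo 0 (m+1) = Finset.Ico 1 (m+1) by
        ext x; simp [Finset.mem_Ioo, Finset.mem_Ico]; omega]
      rw [Finset.sum_Ico_eq_sum_range]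
      simp
    rw [Finset.sum_range_succ, Finset.sum_range_succ']
    have hdef : sq g (m+1) = (g (m+1) - ∑ i ∈ (Finset.Ioo 0 (m+1)).attach,
        sq g i.1 * sq g (m+1 - i.1)) / 2 := by rw [sq]
    rw [hsum] at hdef
    have h0 : sq g 0 = 1 := by rw [sq]
    simp only [h0, mul_one, one_mul, Nat.sub_zero, Nat.sub_self]
    have : ∀ k ∈ Finset.range m, sq g (k+1) * sq g (m + 1 - (k+1)) = sq g (1+k) * sq g (m+1-(1+k)) := by
      intro k hk
      simp only [Finset.mem_range] at hk
      rw [add_comm 1 k]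
    rw [Finset.sum_congr rfl this]
    field_simp at hdef ⊢
    linarith [hdef]


end G0aux

namespace G0aux
open Finset

lemma sqrt_exists (U : PowerSeries ℚ) (hUS : memS U) (hU0 : constantCoeff U = 0) :
    ∃ E : PowerSeries ℚ, E ^ 2 = 1 + C 8 * U ∧ constantCoeff E = 1 ∧
      memS E ∧ (∀ n, ∃ s ∈ S, coeff n (E - 1 - C 4 * U) = 8 * s) := by
  set g : ℕ → ℚ := fun n => coeff n (1 + C 8 * U) with hg
  have hg0 : g 0 = 1 := by
    simp [hg, coeff_zero_eq_constantCoeff, hU0]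
  have hgn : ∀ n, 1 ≤ n → g n = 8 * coeff n U := by
    intro n hn
    simp [hg, coeff_one, (by omega : n ≠ 0)]
    intro h; omega
  -- key divisibility estimate
  have key : ∀ n, 1 ≤ n → ∃ s ∈ S, sq g n = 4 * coeff n U + 8 * s := by
    intro n
    induction n using Nat.strong_induction_on with
    | _ n ih =>
      intro hn
      obtain ⟨m, rfl⟩ : ∃ m, n = m + 1 := ⟨n - 1, by omega⟩
      have hterm : ∀ i ∈ Finset.Ioo 0 (m+1), ∃ t ∈ S, sq g i * sq g (m+1-i) = 16 * t := by
        intro i hi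
        simp only [Finset.mem_Ioo] at hi
        obtain ⟨s₁, hs₁, he₁⟩ := ih i (by omega) (by omega)
        obtain ⟨s₂, hs₂, he₂⟩ := ih (m+1-i) (by omega) (by omega)
        refine ⟨(coeff i U + 2 * s₁) * (coeff (m+1-i) U + 2 * s₂), 
          S.mul_mem (S.add_mem (hUS i) (S.mul_mem (intS 2) hs₁))
            (S.add_mem (hUS (m+1-i)) (S.mul_mem (intS 2) hs₂)), ?_⟩
        rw [he₁, he₂]; ring
      choose t htS hte using hterm
      have hsum : ∑ i ∈ (Finset.Ioo 0 (m+1)).attach, sq g i.1 * sq g (m+1 - i.1)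
          = 16 * ∑ i ∈ (Finset.Ioo 0 (m+1)).attach, t i.1 i.2 := by
        rw [Finset.mul_sum]
        exact Finset.sum_congr rfl fun i _ => hte i.1 i.2
      have hdef : sq g (m+1) = (g (m+1) - ∑ i ∈ (Finset.Ioo 0 (m+1)).attach,
          sq g i.1 * sq g (m+1 - i.1)) / 2 := by rw [sq]
      rw [hsum, hgn (m+1) (by omega)] at hdef
      refine ⟨-∑ i ∈ (Finset.Ioo 0 (m+1)).attach, t i.1 i.2,
        S.neg_mem (S.sum_mem fun i _ => htS i.1 i.2), ?_⟩
      rw [hdef]; ring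
  refine ⟨PowerSeries.mk (sq g), ?_, ?_, ?_, ?_⟩
  · rw [sq_sq g hg0]
    exact PowerSeries.ext fun n => by rw [coeff_mk]
  · have : sq g 0 = 1 := by rw [sq]
    simp [← coeff_zero_eq_constantCoeff, this]
  · intro n
    rw [coeff_mk]
    rcases Nat.eq_zero_or_pos n with rfl | hn
    · rw [show sq g 0 = 1 by rw [sq]]; exact S.one_mem
    · obtain ⟨s, hs, he⟩ := key n hn
      rw [he]
      exact S.add_mem (S.mul_mem (intS 4) (hUS n)) (S.mul_mem (intS 8) hs)
  · intro n
    rcases Nat.eq_zero_or_pos n with rfl | hn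
    · refine ⟨0, S.zero_mem, ?_⟩
      have h1 : coeff 0 (PowerSeries.mk (sq g)) = 1 := by
        rw [coeff_mk]; rw [sq]
      simp [coeff_zero_eq_constantCoeff, hU0, map_sub] at h1 ⊢
      rw [h1]
      ring
    · obtain ⟨s, hs, he⟩ := key n hn
      refine ⟨s, hs, ?_⟩
      have hone : coeff n (1 : PowerSeries ℚ) = 0 := by
        rw [coeff_one, if_neg (by omega)]
      rw [map_sub, map_sub, coeff_mk, hone, coeff_C_mul, he]
      ring


lemma sqrt_unique {A B : PowerSeries ℚ} (hA : constantCoeff A = 1)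
    (hB : constantCoeff B = 1) (h : A ^ 2 = B ^ 2) : A = B := by
  have h2 : (A - B) * (A + B) = 0 := by linear_combination h
  have hne : A + B ≠ 0 := fun hc => by
    have := congrArg constantCoeff hc
    rw [map_add, hA, hB] at this
    norm_num at this
  rcases mul_eq_zero.1 h2 with h' | h'
  · exact sub_eq_zero.1 h'
  · exact absurd h' hne

lemma Md_weaken {f} (h : Md 16 f) : Md 8 f := fun n => by
  obtain ⟨s, hs, he⟩ := h n
  exact ⟨2 * s, S.mul_mem (intS 2) hs, by rw [he]; ring⟩

lemma branch (c u : ℚ) (hc : c ∈ S) (hu : u ∈ S) (huc : c ^ 2 + 8 * u = 1)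
    (A : PowerSeries ℚ) (hA1 : constantCoeff A = 1)
    (hA : A ^ 2 = 1 - C (2 * c) * X + X ^ 2) :
    ∃ ip R W : PowerSeries ℚ,
      (1 - C c * X) * ip = 1 ∧ memS ip ∧ Md 8 R ∧ Md 8 W ∧
      A⁻¹ = ip - C 4 * C u * X ^ 2 * ip ^ 3 - R * ip + W * ip := by
  set P : PowerSeries ℚ := 1 - C c * X with hPdef
  have hP0 : constantCoeff P = 1 := by simp [hPdef]
  have hP0' : constantCoeff P ≠ 0 := by rw [hP0]; norm_num
  set ip : PowerSeries ℚ := P⁻¹ with hipdef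
  have hip : P * ip = 1 := PowerSeries.mul_inv_cancel _ hP0'
  have hmemP : memS P := memS_sub memS_one (memS_mul (memS_C hc) memS_X)
  have hmemip : memS ip := memS_inv hmemP hP0
  set U : PowerSeries ℚ := C u * X ^ 2 * ip ^ 2 with hUdef
  have hUS : memS U := memS_mul (memS_mul (memS_C hu) (memS_pow memS_X 2)) (memS_pow hmemip 2)
  have hU0 : constantCoeff U = 0 := by simp [hUdef]
  obtain ⟨E, hE2, hE1, hES, hEdvd⟩ := sqrt_exists U hUS hU0
  have hC : (C c) ^ 2 + C 8 * C u = 1 := by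
    rw [← map_pow, ← map_mul, ← map_add, huc, map_one]
  have h2c : C (2 * c) = 2 * C c := by rw [map_mul, map_ofNat]
  have hPE : (P * E) ^ 2 = A ^ 2 := by
    rw [hA]
    calc (P * E) ^ 2 = P ^ 2 * (1 + C 8 * U) := by rw [mul_pow, hE2]
      _ = P ^ 2 + C 8 * C u * X ^ 2 * (P * ip) ^ 2 := by rw [hUdef]; ring
      _ = P ^ 2 + C 8 * C u * X ^ 2 := by rw [hip]; ring
      _ = 1 - C (2 * c) * X + X ^ 2 := by
          rw [h2c, hPdef]
          linear_combination X ^ 2 * hC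
  have hAPE : A = P * E := (sqrt_unique hA1 (by rw [map_mul, hP0, hE1, mul_one]) hPE.symm)
  have hE1' : constantCoeff E ≠ 0 := by rw [hE1]; norm_num
  set iE : PowerSeries ℚ := E⁻¹ with hiEdef
  have hiE : E * iE = 1 := PowerSeries.mul_inv_cancel _ hE1'
  have hmemiE : memS iE := memS_inv hES hE1
  have hAinv : A⁻¹ = ip * iE := by
    rw [hAPE, PowerSeries.mul_inv_rev, ← hipdef, ← hiEdef, mul_comm]
  set R : PowerSeries ℚ := E - 1 - C 4 * U with hRdef
  have hR : Md 8 R := fun n => hEdvd n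
  have hMd4 : Md 4 (1 - E) := fun n => by
    obtain ⟨s, hs, he⟩ := hEdvd n
    refine ⟨-(coeff n U + 2 * s), S.neg_mem (S.add_mem (hUS n) (S.mul_mem (intS 2) hs)), ?_⟩
    have hx : coeff n (1 - E) = -(coeff n (E - 1 - C 4 * U)) - 4 * coeff n U := by
      simp only [map_sub, coeff_C_mul]
      ring
    rw [hx, he]; ring
  set W : PowerSeries ℚ := (1 - E) ^ 2 * iE with hWdef
  have hW : Md 8 W := by
    apply Md_weaken
    have h16 : Md (4 * 4) ((1 - E) * (1 - E)) := Md_mul hMd4 hMd4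
    have : ((1 - E) * (1 - E)) * iE = W := by rw [hWdef]; ring
    rw [← this]
    have := Md_mul_memS h16 hmemiE
    norm_num at this ⊢
    exact this
  refine ⟨ip, R, W, hip, hmemip, hR, hW, ?_⟩
  have hiE' : iE = (2 - E) + (1 - E) ^ 2 * iE := by linear_combination (2 - E) * hiE
  rw [hAinv, hiE', hRdef, hWdef, hUdef]
  ring



instance : CharZero (LaurentSeries ℚ) :=
  ⟨fun m n h => by
    have h2 : (HahnSeries.C (m : ℚ) : LaurentSeries ℚ) = HahnSeries.C (n : ℚ) := by
      rw [map_natCast, map_natCast]; exact h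
    exact Nat.cast_injective (HahnSeries.C_injective h2)⟩

lemma key1 {K : Type*} [Field K] [CharZero K] (y x a b : K)
    (hy : (1 - x ^ 2) * y = 1)
    (ha : (1 - 1 / 3 * x) * a = 1) (hb : (1 - -(1 / 3) * x) * b = 1) :
    (1 / 4 : K) * y + (3 / 8 : K) * (a + b) = (1 - (7 / 9 : K) * x ^ 2) * y * (a * b) := by
  linear_combination (-(3/8 : K) * b - (1/4 : K) * y * ((1 - -(1/3) * x) * b)) * ha
    + (-(3/8 : K) * a - (1/4 : K) * y) * hb + (-(3/4 : K) * a * b) * hy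

lemma key2 {K : Type*} [Field K] [CharZero K] (x a b : K)
    (ha : (1 - 1 / 3 * x) * a = 1) (hb : (1 - -(1 / 3) * x) * b = 1) :
    (3 / 8 : K) * (4 * (1 / 9) * x ^ 2 * (a ^ 3 + b ^ 3))
      = x ^ 2 * ((1 / 3 : K) + (1 / 9 : K) * x ^ 2) * (a * b) ^ 3 := by
  linear_combination ((1/6 : K) * x^2) * (-(b^3) * (((1 - 1/3 * x) * a)^2 + (1 - 1/3 * x) * a + 1)) * ha
    + ((1/6 : K) * x^2) * (-(a^3) * (((1 - -(1/3) * x) * b)^2 + (1 - -(1/3) * x) * b + 1)) * hb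






lemma F2 (ia ib : PowerSeries ℚ)
    (ha : (1 - C (1/3) * X) * ia = 1)
    (hb : (1 - C (-(1/3)) * X) * ib = 1) :
    C (3/8) * (C 4 * C (1/9) * X^2 * (ia^3 + ib^3))
      = X^2 * (C (1/3) + C (1/9) * X^2) * (ia * ib)^3 := by
  apply HahnSeries.ofPowerSeries_injective (R := ℚ) (Γ := ℤ)
  have hmulA := congrArg (HahnSeries.ofPowerSeries ℤ ℚ) ha
  have hmulB := congrArg (HahnSeries.ofPowerSeries ℤ ℚ) hb
  simp only [map_mul, map_add, map_sub, map_pow, map_one, HahnSeries.ofPowerSeries_C,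
    map_div₀, map_neg, map_ofNat] at hmulA hmulB ⊢
  exact key2 _ _ _ hmulA hmulB

lemma F1 (iy ia ib : PowerSeries ℚ)
    (hy : (1 - X^2) * iy = 1)
    (ha : (1 - C (1/3) * X) * ia = 1)
    (hb : (1 - C (-(1/3)) * X) * ib = 1) :
    C (1/4) * iy + C (3/8) * (ia + ib)
      = (1 - C (7/9) * X^2) * iy * (ia * ib) := by
  apply HahnSeries.ofPowerSeries_injective (R := ℚ) (Γ := ℤ)
  have hmulY := congrArg (HahnSeries.ofPowerSeries ℤ ℚ) hy
  have hmulA := congrArg (HahnSeries.ofPowerSeries ℤ ℚ) ha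
  have hmulB := congrArg (HahnSeries.ofPowerSeries ℤ ℚ) hb
  simp only [map_mul, map_add, map_sub, map_pow, map_one, HahnSeries.ofPowerSeries_C,
    map_div₀, map_neg, map_ofNat] at hmulY hmulA hmulB ⊢
  have := key1 (HahnSeries.ofPowerSeries ℤ ℚ iy) (HahnSeries.ofPowerSeries ℤ ℚ X)
    (HahnSeries.ofPowerSeries ℤ ℚ ia) (HahnSeries.ofPowerSeries ℤ ℚ ib) hmulY hmulA hmulB
  linear_combination this


lemma Md_neg {c : ℚ} {f} (h : Md c f) : Md c (-f) := fun n => by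
  obtain ⟨s, hs, he⟩ := h n
  exact ⟨-s, S.neg_mem hs, by rw [map_neg, he]; ring⟩

lemma Md_sub {c : ℚ} {f g} (hf : Md c f) (hg : Md c g) : Md c (f - g) := by
  rw [sub_eq_add_neg]; exact Md_add hf (Md_neg hg)

end G0aux

open G0aux

/-- Every coefficient of `G₀(w) = 1/(4(1-w²)) + 3/(8√(1-(2/3)w+w²)) + 3/(8√(1+(2/3)w+w²))`
lies in `ℤ[1/3]`, i.e. is of the form `a/3^k` with `a ∈ ℤ`, `k ∈ ℕ`. -/
theorem G0_coeffs_in_Z_one_third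
    (A B : PowerSeries ℚ)
    (hA1 : constantCoeff A = 1) (hA : A ^ 2 = 1 - C (2 / 3 : ℚ) * X + X ^ 2)
    (hB1 : constantCoeff B = 1) (hB : B ^ 2 = 1 + C (2 / 3 : ℚ) * X + X ^ 2) :
    ∀ n : ℕ, ∃ (a : ℤ) (k : ℕ),
      coeff n (C (1 / 4 : ℚ) * (1 - X ^ 2)⁻¹ + C (3 / 8 : ℚ) * A⁻¹ + C (3 / 8 : ℚ) * B⁻¹) =
        (a : ℚ) / 3 ^ k := by
  intro n
  have hc3 : (1/3 : ℚ) ∈ S := ⟨1, 1, by norm_num⟩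
  have hc9 : (1/9 : ℚ) ∈ S := ⟨1, 2, by norm_num⟩
  have h79 : (7/9 : ℚ) ∈ S := ⟨7, 2, by norm_num⟩
  have hA' : A ^ 2 = 1 - C (2 * (1/3)) * X + X ^ 2 := by
    rw [show (2 * (1/3) : ℚ) = 2/3 by norm_num]; exact hA
  obtain ⟨ia, Ra, Wa, hipa, hma, hRa, hWa, hadec⟩ :=
    branch (1/3) (1/9) hc3 hc9 (by norm_num) A hA1 hA'
  have hB' : B ^ 2 = 1 - C (2 * (-(1/3))) * X + X ^ 2 := by
    rw [show (2 * (-(1/3)) : ℚ) = -(2/3) by norm_num, map_neg, hB]; ring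
  obtain ⟨ib, Rb, Wb, hipb, hmb, hRb, hWb, hbdec⟩ :=
    branch (-(1/3)) (1/9) (S.neg_mem hc3) hc9 (by norm_num) B hB1 hB'
  have hy0 : constantCoeff (1 - X ^ 2 : PowerSeries ℚ) = 1 := by simp
  set iy : PowerSeries ℚ := (1 - X ^ 2 : PowerSeries ℚ)⁻¹ with hiy
  have hy : (1 - X ^ 2 : PowerSeries ℚ) * iy = 1 :=
    PowerSeries.mul_inv_cancel _ (by rw [hy0]; norm_num)
  have hmy : memS iy := memS_inv (memS_sub memS_one (memS_pow memS_X 2)) hy0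
  have hF1 := F1 iy ia ib hy hipa hipb
  have hF2 := F2 ia ib hipa hipb
  set T3 : PowerSeries ℚ := -(Ra * ia) - Rb * ib + Wa * ia + Wb * ib with hT3
  have hG : C (1/4) * iy + C (3/8) * A⁻¹ + C (3/8) * B⁻¹
      = (1 - C (7/9) * X ^ 2) * iy * (ia * ib)
        - X ^ 2 * (C (1/3) + C (1/9) * X ^ 2) * (ia * ib) ^ 3
        + C (3/8) * T3 := by
    rw [hadec, hbdec, hT3]
    linear_combination hF1 - hF2
  have hT3Md : Md 8 T3 := by
    rw [hT3]
    exact Md_add (Md_add (Md_sub (Md_neg (Md_mul_memS hRa hma)) (Md_mul_memS hRb hmb))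
      (Md_mul_memS hWa hma)) (Md_mul_memS hWb hmb)
  have hmem : coeff n (C (1/4) * iy + C (3/8) * A⁻¹ + C (3/8) * B⁻¹) ∈ S := by
    rw [hG, map_add, map_sub]
    have h1 : memS ((1 - C (7/9) * X ^ 2) * iy * (ia * ib)) :=
      memS_mul (memS_mul (memS_sub memS_one (memS_mul (memS_C h79) (memS_pow memS_X 2))) hmy)
        (memS_mul hma hmb)
    have h2 : memS (X ^ 2 * (C (1/3) + C (1/9) * X ^ 2) * (ia * ib) ^ 3) :=
      memS_mul (memS_mul (memS_pow memS_X 2)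
        (memS_add (memS_C hc3) (memS_mul (memS_C hc9) (memS_pow memS_X 2))))
        (memS_pow (memS_mul hma hmb) 3)
    have h3 : coeff n (C (3/8) * T3) ∈ S := by
      obtain ⟨s, hs, he⟩ := hT3Md n
      rw [coeff_C_mul, he, show (3/8 : ℚ) * (8 * s) = 3 * s by ring]
      exact S.mul_mem (intS 3) hs
    exact S.add_mem (S.sub_mem (h1 n) (h2 n)) h3
  obtain ⟨a, k, hak⟩ := mem_S.1 hmem
  exact ⟨a, k, hak⟩
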